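/- Let V be a finite type of vertices, and for every ordered pair of vertices i, j let E i j be a finite type of directed edges from i to j, with a real n×n matrix A e assigned to each edge e ∈ E i j. Assume: (1) there are no loops, i.e., E i i is empty for every i; (2) between any unordered pair of distinct vertices there is at most one edge, i.e., the sum type (E i j) ⊕ (E j i) is a subsingleton for all i ≠ j; (3) the simple graph G on V with G.Adj i j ↔ (i ≠ j ∧ (Nonempty (E i j) ∨ Nonempty (E j i))) is acyclic. Then there exists a family of real orthogonal n×n matrices Q v, one for each vertex v, such that for every edge e ∈ E i j the matrix (Q j)ᵀ (A e) (Q i) is upper triangular. -/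

import Mathlib

open Matrix

section LinAlg

open Module

/-- QR: for any real square matrix `C` there is an orthogonal `Q` with `Qᵀ C` upper
triangular. -/
lemma qr_exists (n : ℕ) (C : Matrix (Fin n) (Fin n) ℝ) :
    ∃ Q : Matrix (Fin n) (Fin n) ℝ, Qᵀ * Q = 1 ∧
      ∀ p q : Fin n, q < p → (Qᵀ * C) p q = 0 := by
  have h : finrank ℝ (EuclideanSpace ℝ (Fin n)) = Fintype.card (Fin n) := by simp
  let f : Fin n → EuclideanSpace ℝ (Fin n) := fun j => WithLp.toLp 2 (fun k => C k j)
  let b : OrthonormalBasis (Fin n) ℝ (EuclideanSpace ℝ (Fin n)) :=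
    @InnerProductSpace.gramSchmidtOrthonormalBasis ℝ (EuclideanSpace ℝ (Fin n)) _ _ _ (Fin n) _ _
      (inferInstance : WellFoundedLT (Fin n)) _ _ h f
  refine ⟨Matrix.of (fun k i => b i k), ?_, ?_⟩
  · ext i j
    have horth := b.orthonormal
    rw [orthonormal_iff_ite] at horth
    have := horth i j
    simp only [PiLp.inner_apply, RCLike.inner_apply, conj_trivial] at this
    simp only [Matrix.mul_apply, Matrix.transpose_apply, Matrix.of_apply, Matrix.one_apply]
    simpa [mul_comm] using this
  · intro p q hlt
    have h0 := @InnerProductSpace.gramSchmidtOrthonormalBasis_inv_triangular ℝ (EuclideanSpace ℝ (Fin n)) _ _ _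
      (Fin n) _ _ (inferInstance : WellFoundedLT (Fin n)) _ _ h f q p hlt
    simp only [PiLp.inner_apply, RCLike.inner_apply, conj_trivial] at h0
    simpa [Matrix.mul_apply, f, b, mul_comm] using h0

/-- Lower-triangular variant. -/
lemma ql_exists (n : ℕ) (C : Matrix (Fin n) (Fin n) ℝ) :
    ∃ Q : Matrix (Fin n) (Fin n) ℝ, Qᵀ * Q = 1 ∧
      ∀ p q : Fin n, p < q → (Qᵀ * C) p q = 0 := by
  obtain ⟨Q₀, h1, h2⟩ := qr_exists n (C.submatrix Fin.rev Fin.rev)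
  refine ⟨Q₀.submatrix ⇑(Fin.revPerm (n := n)) ⇑(Fin.revPerm (n := n)), ?_, ?_⟩
  · rw [Matrix.transpose_submatrix, Matrix.submatrix_mul_equiv, h1,
      Matrix.submatrix_one_equiv]
  · intro p q hpq
    have hC : C = (C.submatrix Fin.rev Fin.rev).submatrix
        ⇑(Fin.revPerm (n := n)) ⇑(Fin.revPerm (n := n)) := by
      ext a b; simp
    rw [Matrix.transpose_submatrix]
    conv_lhs => rw [hC]
    rw [Matrix.submatrix_mul_equiv]
    exact h2 _ _ (by simpa using hpq)

/-- For any real square matrix `B` there is an orthogonal `Q` with `B Q` upper triangular. -/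
lemma rq_exists (n : ℕ) (B : Matrix (Fin n) (Fin n) ℝ) :
    ∃ Q : Matrix (Fin n) (Fin n) ℝ, Qᵀ * Q = 1 ∧
      ∀ p q : Fin n, q < p → (B * Q) p q = 0 := by
  obtain ⟨Q, h1, h2⟩ := ql_exists n Bᵀ
  refine ⟨Q, h1, fun p q hlt => ?_⟩
  have := h2 q p hlt
  rwa [← Matrix.transpose_mul, Matrix.transpose_apply] at this

end LinAlg

section Graph

variable {V : Type} {G : SimpleGraph V}

/-- The next-to-last vertex of a walk. -/
def wpenult {u v : V} (p : G.Walk u v) : V := p.reverse.getVert 1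

lemma wpenult_concat {u v w : V} (p : G.Walk u v) (h : G.Adj v w) :
    wpenult (p.concat h) = v := by
  rw [wpenult, SimpleGraph.Walk.reverse_concat, SimpleGraph.Walk.getVert_cons_succ,
    SimpleGraph.Walk.getVert_zero]

lemma core_lemma (hG : G.IsAcyclic) {r i j : V} (hadj : G.Adj i j)
    (p : G.Path r i) (q : G.Path r j) :
    (wpenult q.1 = i ∧ p.1.length + 1 = q.1.length) ∨
    (wpenult p.1 = j ∧ q.1.length + 1 = p.1.length) := by
  classical
  have huniq := SimpleGraph.isAcyclic_iff_path_unique.mp hG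
  by_cases hj : j ∈ p.1.support
  · right
    have hq' : q.1 = p.1.takeUntil j hj :=
      congrArg Subtype.val (huniq q ⟨p.1.takeUntil j hj, p.2.takeUntil hj⟩)
    have h2 : (SimpleGraph.Walk.cons hadj.symm SimpleGraph.Walk.nil : G.Walk j i).IsPath := by
      simp [SimpleGraph.Walk.cons_isPath_iff, hadj.ne']
    have hdrop : p.1.dropUntil j hj = SimpleGraph.Walk.cons hadj.symm SimpleGraph.Walk.nil :=
      congrArg Subtype.val
        (huniq ⟨p.1.dropUntil j hj, p.2.dropUntil hj⟩ ⟨_, h2⟩)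
    have hp' : p.1 = (p.1.takeUntil j hj).concat hadj.symm := by
      conv_lhs => rw [← SimpleGraph.Walk.take_spec p.1 hj]
      rw [hdrop, SimpleGraph.Walk.concat_eq_append]
    constructor
    · rw [hp', wpenult_concat]
    · rw [hp', hq', SimpleGraph.Walk.length_concat]
  · left
    have hcq : (p.1.concat hadj).IsPath := by
      rw [← SimpleGraph.Walk.isPath_reverse_iff, SimpleGraph.Walk.reverse_concat,
        SimpleGraph.Walk.cons_isPath_iff]
      refine ⟨(SimpleGraph.Walk.isPath_reverse_iff _).mpr p.2, ?_⟩
      rw [SimpleGraph.Walk.support_reverse, List.mem_reverse]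
      exact hj
    have hq' : q.1 = p.1.concat hadj :=
      congrArg Subtype.val (huniq q ⟨p.1.concat hadj, hcq⟩)
    exact ⟨by rw [hq', wpenult_concat], by rw [hq', SimpleGraph.Walk.length_concat]⟩

lemma core_lemma' (hG : G.IsAcyclic) {r r' i j : V} (hadj : G.Adj i j) (hrr : r = r')
    (p : G.Path r i) (q : G.Path r' j) :
    (wpenult q.1 = i ∧ p.1.length + 1 = q.1.length) ∨
    (wpenult p.1 = j ∧ q.1.length + 1 = p.1.length) := by
  subst hrr
  exact core_lemma hG hadj p q

lemma forest_parent (G : SimpleGraph V) (hG : G.IsAcyclic) :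
    ∃ (rk : V → ℕ) (par : V → V), ∀ i j, G.Adj i j →
      (par j = i ∧ rk i < rk j) ∨ (par i = j ∧ rk j < rk i) := by
  classical
  set root : V → V := fun v => (G.connectedComponentMk v).out with hroot
  have hreach : ∀ v, G.Reachable (root v) v := fun v =>
    SimpleGraph.ConnectedComponent.exact ((G.connectedComponentMk v).out_eq)
  set pth : ∀ v, G.Path (root v) v := fun v => ((hreach v).some).toPath with hpth
  refine ⟨fun v => (pth v).1.length, fun v => wpenult (pth v).1, ?_⟩
  intro i j hadj
  have hr : root i = root j :=
    congrArg Quot.out (SimpleGraph.ConnectedComponent.sound hadj.reachable)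
  rcases core_lemma' hG hadj hr (pth i) (pth j) with ⟨h1, h2⟩ | ⟨h1, h2⟩
  · exact Or.inl ⟨h1, by exact lt_of_lt_of_eq (Nat.lt_succ_self _) h2⟩
  · exact Or.inr ⟨h1, by exact lt_of_lt_of_eq (Nat.lt_succ_self _) h2⟩

end Graph

section Build

variable {n : ℕ} {V : Type} (E : V → V → Type)
  (A : ∀ i j, E i j → Matrix (Fin n) (Fin n) ℝ) (par : V → V)

open Classical in
/-- One step: choose the orthogonal matrix at `v` given the matrix at its parent. -/
noncomputable def FStep (v : V) (M : Matrix (Fin n) (Fin n) ℝ) :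
    Matrix (Fin n) (Fin n) ℝ :=
  if h : Nonempty (E (par v) v ⊕ E v (par v)) then
    match Classical.choice h with
    | Sum.inl e => (qr_exists n (A (par v) v e * M)).choose
    | Sum.inr e => (rq_exists n (Mᵀ * A v (par v) e)).choose
  else 1

lemma FStep_orth (v : V) (M : Matrix (Fin n) (Fin n) ℝ) :
    (FStep E A par v M)ᵀ * FStep E A par v M = 1 := by
  rw [FStep]
  split
  · rename_i h
    rcases hc : Classical.choice h with e | e
    · simp only [hc]
      exact (qr_exists n (A (par v) v e * M)).choose_spec.1
    · simp only [hc]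
      exact (rq_exists n (Mᵀ * A v (par v) e)).choose_spec.1
  · simp

variable (rk : V → ℕ)

/-- The family of orthogonal matrices, built by recursion along the parent map. -/
noncomputable def buildQ (v : V) : Matrix (Fin n) (Fin n) ℝ :=
  if h : rk (par v) < rk v then FStep E A par v (buildQ (par v)) else 1
termination_by rk v
decreasing_by exact h

lemma buildQ_orth (v : V) : (buildQ E A par rk v)ᵀ * buildQ E A par rk v = 1 := by
  rw [buildQ]
  split
  · exact FStep_orth E A par v _
  · simp

end Build

/-- Forest case of the simultaneous orthogonal triangularization theorem: the real matrices
of linear maps associated with a quiver whose underlying undirected simple graph is acyclic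
can be simultaneously reduced to upper triangular form by orthogonal changes of bases. -/
theorem real_forest_schur (n : ℕ) (V : Type) [Fintype V]
    (E : V → V → Type) [∀ i j, Fintype (E i j)]
    (A : ∀ i j, E i j → Matrix (Fin n) (Fin n) ℝ)
    (hloopless : ∀ i, IsEmpty (E i i))
    (hsimple : ∀ i j : V, i ≠ j → Subsingleton (E i j ⊕ E j i))
    (hacyclic : SimpleGraph.IsAcyclic
      { Adj := fun i j => i ≠ j ∧ (Nonempty (E i j) ∨ Nonempty (E j i)),
        symm := ⟨fun i j h => ⟨h.1.symm, h.2.symm⟩⟩,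
        loopless := ⟨fun i h => h.1 rfl⟩ }) :
    ∃ Q : V → Matrix (Fin n) (Fin n) ℝ,
      (∀ v, (Q v)ᵀ * Q v = 1) ∧
      ∀ (i j : V) (e : E i j), ∀ p q : Fin n, q < p →
        ((Q j)ᵀ * A i j e * Q i) p q = 0 := by
  classical
  set G : SimpleGraph V :=
    { Adj := fun i j => i ≠ j ∧ (Nonempty (E i j) ∨ Nonempty (E j i)),
      symm := ⟨fun i j h => ⟨h.1.symm, h.2.symm⟩⟩,
      loopless := ⟨fun i h => h.1 rfl⟩ } with hG
  obtain ⟨rk, par, hpar⟩ := forest_parent G hacyclic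
  refine ⟨buildQ E A par rk, buildQ_orth E A par rk, ?_⟩
  intro i j e p q hpq
  have hne : i ≠ j := fun h => (hloopless i).elim (h ▸ e)
  have hadj : G.Adj i j := ⟨hne, Or.inl ⟨e⟩⟩
  rcases hpar i j hadj with ⟨hpj, hlt⟩ | ⟨hpi, hlt⟩
  · -- par j = i : Q j is built from Q i
    subst hpj
    have hQj : buildQ E A par rk j = FStep E A par j (buildQ E A par rk (par j)) := by
      rw [buildQ, dif_pos hlt]
    rw [hQj, FStep]
    have hne' : Nonempty (E (par j) j ⊕ E j (par j)) := ⟨Sum.inl e⟩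
    rw [dif_pos hne']
    have hss : Subsingleton (E (par j) j ⊕ E j (par j)) := hsimple (par j) j hne
    have hch : Classical.choice hne' = Sum.inl e := Subsingleton.elim _ _
    rw [hch]
    have hspec := (qr_exists n (A (par j) j e * buildQ E A par rk (par j))).choose_spec.2
    rw [Matrix.mul_assoc]
    exact hspec p q hpq
  · -- par i = j : Q i is built from Q j
    subst hpi
    have hQi : buildQ E A par rk i = FStep E A par i (buildQ E A par rk (par i)) := by
      rw [buildQ, dif_pos hlt]
    rw [hQi, FStep]
    have hne' : Nonempty (E (par i) i ⊕ E i (par i)) := ⟨Sum.inr e⟩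
    have hss : Subsingleton (E (par i) i ⊕ E i (par i)) := hsimple (par i) i hne.symm
    rw [dif_pos hne']
    have hch : Classical.choice hne' = Sum.inr e := Subsingleton.elim _ _
    rw [hch]
    have hspec := (rq_exists n ((buildQ E A par rk (par i))ᵀ * A i (par i) e)).choose_spec.2
    exact hspec p q hpq
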